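/- Let η ∈ (0,1] and c > 0, and set Γ_c = {(x,y) ∈ ℝ² : x = c|y|^η}. There exist C > 1 and ε > 0 such that for all (x₀, y₀) with x₀ ≥ 0, x₀ < ε and |y₀| < ε: C⁻¹ · | |y₀| − (c⁻¹x₀)^{1/η} | ≤ dist((x₀,y₀), Γ_c) ≤ C · | |y₀| − (c⁻¹x₀)^{1/η} |. -/

import Mathlib

noncomputable section

/-- The point `(a, b)` in Euclidean `ℝ²`. -/
def pt (a b : ℝ) : EuclideanSpace ℝ (Fin 2) := (WithLp.equiv 2 (Fin 2 → ℝ)).symm ![a, b]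

lemma dist_pt (a b a' b' : ℝ) : dist (pt a b) (pt a' b') = Real.sqrt ((a-a')^2 + (b-b')^2) := by
  rw [EuclideanSpace.dist_eq]
  simp [Fin.sum_univ_two, Real.dist_eq, sq_abs, pt]

lemma key0 (p : ℝ) (hp : 1 ≤ p) {a b : ℝ} (ha : 0 ≤ a) (hab : a ≤ b) :
    b^p - a^p ≤ p * b^(p-1) * (b - a) := by
  rcases eq_or_lt_of_le hab with rfl | h
  · simp
  have hb : 0 ≤ b := le_trans ha hab
  have hder : ∀ x : ℝ, HasDerivAt (fun x => x ^ p) (p * x ^ (p-1)) x := fun x =>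
    Real.hasDerivAt_rpow_const (Or.inr hp)
  obtain ⟨ξ, hξ, heq⟩ := exists_hasDerivAt_eq_slope (fun x => x ^ p) (fun x => p * x ^ (p-1)) h
    (fun x _ => (hder x).continuousAt.continuousWithinAt) (fun x _ => hder x)
  have hξ0 : 0 ≤ ξ := le_of_lt (lt_of_le_of_lt ha hξ.1)
  have hξb : ξ ^ (p-1) ≤ b ^ (p-1) := Real.rpow_le_rpow hξ0 hξ.2.le (by linarith)
  have : (b^p - a^p) / (b - a) ≤ p * b ^ (p-1) := by
    rw [← heq]
    have hp0 : 0 ≤ p := by linarith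
    nlinarith
  calc b^p - a^p = (b^p - a^p) / (b-a) * (b-a) := by
        rw [div_mul_cancel₀ _ (by linarith : b - a ≠ 0)]
    _ ≤ p * b^(p-1) * (b-a) := mul_le_mul_of_nonneg_right this (by linarith)

lemma key (p : ℝ) (hp : 1 ≤ p) (A : ℝ) {u v : ℝ} (hu : 0 ≤ u) (hv : 0 ≤ v)
    (hu' : u ≤ A) (hv' : v ≤ A) : |u^p - v^p| ≤ p * A^(p-1) * |u - v| := by
  have hA : 0 ≤ A := le_trans hu hu'
  have main : ∀ a b : ℝ, 0 ≤ a → a ≤ b → b ≤ A → |b^p - a^p| ≤ p * A^(p-1) * |b - a| := by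
    intro a b ha hab hbA
    have h1 := key0 p hp ha hab
    have h2 : b^(p-1) ≤ A^(p-1) := Real.rpow_le_rpow (le_trans ha hab) hbA (by linarith)
    have h3 : a^p ≤ b^p := Real.rpow_le_rpow ha hab (by linarith)
    rw [abs_of_nonneg (by linarith), abs_of_nonneg (by linarith)]
    have := mul_le_mul_of_nonneg_left (mul_le_mul_of_nonneg_right h2 (by linarith : (0:ℝ) ≤ b - a)) (by linarith : (0:ℝ) ≤ p)
    nlinarith
  rcases le_total u v with h | h
  · rw [abs_sub_comm (u^p), abs_sub_comm u]; exact main u v hu h hv'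
  · exact main v u hv h hu'

lemma le_infDist' {x : EuclideanSpace ℝ (Fin 2)} {b : ℝ} {s : Set (EuclideanSpace ℝ (Fin 2))}
    (hs : s.Nonempty) (h : ∀ y ∈ s, b ≤ dist x y) : b ≤ Metric.infDist x s := by
  by_contra hlt
  obtain ⟨y, hy, hd⟩ := (Metric.infDist_lt_iff hs).1 (not_le.1 hlt)
  exact absurd (h y hy) (not_le.2 hd)

lemma pt_eq (w : EuclideanSpace ℝ (Fin 2)) : w = pt (w 0) (w 1) := by
  ext i; fin_cases i <;> rfl

lemma abs_le_dist₀ (a b a' b' : ℝ) : |a - a'| ≤ dist (pt a b) (pt a' b') := by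
  rw [show dist (pt a b) (pt a' b') = Real.sqrt ((a-a')^2 + (b-b')^2) from dist_pt a b a' b']
  rw [← Real.sqrt_sq_eq_abs (a - a')]
  exact Real.sqrt_le_sqrt (by nlinarith [sq_nonneg (b - b')])

lemma abs_le_dist₁ (a b a' b' : ℝ) : |b - b'| ≤ dist (pt a b) (pt a' b') := by
  rw [show dist (pt a b) (pt a' b') = Real.sqrt ((a-a')^2 + (b-b')^2) from dist_pt a b a' b']
  rw [← Real.sqrt_sq_eq_abs (b - b')]
  exact Real.sqrt_le_sqrt (by nlinarith [sq_nonneg (a - a')])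


/-- For `η ∈ (0,1]`, `c > 0` and `Γ_c = {(x,y) : x = c|y|^η}`, there are `C > 1`, `ε > 0`
such that for points `(x₀,y₀)` with `x₀ ≥ 0`, `x₀, |y₀| < ε`:
`C⁻¹ ||y₀| − (c⁻¹x₀)^{1/η}| ≤ dist((x₀,y₀), Γ_c) ≤ C ||y₀| − (c⁻¹x₀)^{1/η}|`. -/
theorem stmt8 (η c : ℝ) (hη0 : 0 < η) (hη1 : η ≤ 1) (hc : 0 < c) :
    ∃ C : ℝ, 1 < C ∧ ∃ ε : ℝ, 0 < ε ∧
      ∀ x₀ y₀ : ℝ, 0 ≤ x₀ → x₀ < ε → |y₀| < ε →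
        C⁻¹ * |(|y₀| - (c⁻¹ * x₀) ^ (1/η))| ≤
          Metric.infDist (pt x₀ y₀)
            {w : EuclideanSpace ℝ (Fin 2) | w 0 = c * |w 1| ^ η} ∧
        Metric.infDist (pt x₀ y₀)
            {w : EuclideanSpace ℝ (Fin 2) | w 0 = c * |w 1| ^ η}
          ≤ C * |(|y₀| - (c⁻¹ * x₀) ^ (1/η))| := by
  set p := 1/η with hpdef
  have hp1 : 1 ≤ p := by rw [hpdef, le_div_iff₀ hη0]; linarith
  have hp0 : 0 < p := by linarith
  have h2p : (0:ℝ) < 2 ^ (p - 1) := Real.rpow_pos_of_pos (by norm_num) _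
  set K : ℝ := p * 2 ^ (p-1) * c⁻¹ with hK
  have hK0 : 0 < K := by positivity
  refine ⟨2 + K, by linarith, min 1 c, by positivity, ?_⟩
  intro x₀ y₀ hx0 hxε hyε
  have hC0 : (0:ℝ) < 2 + K := by linarith
  have hx1 : x₀ < 1 := lt_of_lt_of_le hxε (min_le_left _ _)
  have hxc : x₀ < c := lt_of_lt_of_le hxε (min_le_right _ _)
  have hy1 : |y₀| < 1 := lt_of_lt_of_le hyε (min_le_left _ _)
  set t₀ : ℝ := (c⁻¹ * x₀) ^ p with ht₀
  have hv0 : 0 ≤ c⁻¹ * x₀ := by positivity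
  have hv1 : c⁻¹ * x₀ ≤ 1 := by rw [inv_mul_le_iff₀ hc]; linarith
  have ht00 : 0 ≤ t₀ := Real.rpow_nonneg hv0 _
  have ht01 : t₀ ≤ 1 := Real.rpow_le_one hv0 hv1 (by linarith)
  set D : ℝ := |(|y₀| - t₀)| with hD
  have hD0 : 0 ≤ D := abs_nonneg _
  set Γ : Set (EuclideanSpace ℝ (Fin 2)) := {w | w 0 = c * |w 1| ^ η} with hΓ
  -- t₀ is on the curve over x₀
  have ht0η : t₀ ^ η = c⁻¹ * x₀ := by
    rw [ht₀, ← Real.rpow_mul hv0, show p*η = 1 by rw [hpdef]; field_simp, Real.rpow_one]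
  have hmem : ∀ b : ℝ, |b| = t₀ → pt x₀ b ∈ Γ := by
    intro b hb
    show (pt x₀ b) 0 = c * |(pt x₀ b) 1| ^ η
    show x₀ = c * |b| ^ η
    rw [hb, ht0η]; field_simp
  have hne : Γ.Nonempty := ⟨pt 0 0, by
    show (pt 0 0) 0 = c * |(pt 0 0) 1| ^ η
    show (0:ℝ) = c * |(0:ℝ)| ^ η
    rw [abs_zero, Real.zero_rpow hη0.ne', mul_zero]⟩
  constructor
  · -- lower bound
    refine le_infDist' hne fun w hw => ?_
    rw [inv_mul_le_iff₀ hC0]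
    set d := dist (pt x₀ y₀) w with hd
    have hw' : w 0 = c * |w 1| ^ η := hw
    have hd0 : 0 ≤ d := dist_nonneg
    have hdx : |x₀ - w 0| ≤ d := by rw [hd, pt_eq w]; exact abs_le_dist₀ _ _ _ _
    have hdy : |y₀ - w 1| ≤ d := by rw [hd, pt_eq w]; exact abs_le_dist₁ _ _ _ _
    set s : ℝ := |w 1| with hs
    have hs0 : 0 ≤ s := abs_nonneg _
    have htri : D ≤ |(|y₀| - s)| + |s - t₀| := by
      rw [hD]
      calc |(|y₀| - t₀)| = |((|y₀| - s) + (s - t₀))| := by ring_nf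
        _ ≤ |(|y₀| - s)| + |s - t₀| := abs_add_le _ _
    have hys : |(|y₀| - s)| ≤ d := le_trans (abs_abs_sub_abs_le_abs_sub _ _) hdy
    rcases le_or_gt s 2 with hcase | hcase
    · have hu2 : s ^ η ≤ 2 := by
        calc s ^ η ≤ 2 ^ η := Real.rpow_le_rpow hs0 hcase (le_of_lt hη0)
          _ ≤ 2 ^ (1:ℝ) := Real.rpow_le_rpow_of_exponent_le one_le_two hη1
          _ = 2 := Real.rpow_one 2
      have hv2 : c⁻¹ * x₀ ≤ 2 := by linarith
      have hkey := key p hp1 2 (Real.rpow_nonneg hs0 η) hv0 hu2 hv2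
      have hsp : (s ^ η) ^ p = s := by
        rw [← Real.rpow_mul hs0, show η * p = 1 by rw [hpdef]; field_simp, Real.rpow_one]
      rw [hsp] at hkey
      have h1 : |s ^ η - c⁻¹ * x₀| = c⁻¹ * |w 0 - x₀| := by
        rw [hw', show c * s ^ η - x₀ = c * (s ^ η - c⁻¹ * x₀) by field_simp, abs_mul,
          abs_of_pos hc, ← mul_assoc, inv_mul_cancel₀ hc.ne', one_mul]
      have h2 : |s - t₀| ≤ K * d := by
        rw [ht₀] at *
        calc |s - (c⁻¹ * x₀) ^ p| ≤ p * 2 ^ (p-1) * |s ^ η - c⁻¹ * x₀| := hkey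
          _ = K * |w 0 - x₀| := by rw [h1, hK]; ring
          _ ≤ K * d := by
              have : |w 0 - x₀| ≤ d := by rw [abs_sub_comm]; exact hdx
              exact mul_le_mul_of_nonneg_left this hK0.le
      nlinarith [mul_nonneg hK0.le hd0]
    · have h0 := le_abs_self (s - |y₀|)
      have h2 : abs (s - abs y₀) ≤ d := by rw [abs_sub_comm]; exact hys
      have h1 : 1 ≤ d := by linarith
      have h3 : D ≤ 2 := by
        have h4 := abs_sub (|y₀|) t₀
        rw [abs_abs, abs_of_nonneg ht00] at h4
        rw [hD]; linarith
      nlinarith [mul_nonneg hK0.le hd0]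
  · -- upper bound
    set b : ℝ := if 0 ≤ y₀ then t₀ else -t₀ with hb
    have habs : |b| = t₀ := by
      rw [hb]; split_ifs <;> simp [abs_of_nonneg ht00]
    have hdist : dist (pt x₀ y₀) (pt x₀ b) = D := by
      rw [dist_pt]
      simp only [sub_self]
      rw [show (0:ℝ)^2 + (y₀ - b)^2 = (y₀-b)^2 by ring, Real.sqrt_sq_eq_abs]
      rw [hb, hD]
      split_ifs with h
      · rw [abs_of_nonneg h]
      · rw [abs_of_neg (lt_of_not_ge h)]
        rw [show y₀ - -t₀ = -(-y₀ - t₀) by ring, abs_neg]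
    calc Metric.infDist (pt x₀ y₀) Γ ≤ dist (pt x₀ y₀) (pt x₀ b) :=
          Metric.infDist_le_dist_of_mem (hmem b habs)
      _ = D := hdist
      _ ≤ (2 + K) * D := le_mul_of_one_le_left hD0 (by linarith)
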